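/- Let n ≥ 1, let a : Fin n → ℝ, let i : Fin n and δ > 0, and suppose a i ≥ a j + δ for every j ≠ i. Then for every c > 0 the softmax weight at index i with temperature c satisfies exp(c·a i) / (∑ j, exp(c·a j)) ≥ exp(c·δ) / (exp(c·δ) + (n − 1)). -/

import Mathlib

/-- Softmax weight lower bound for a δ-dominant score (quantitative hard selection). -/
theorem softmax_dominant_lower_bound (n : ℕ) (hn : 1 ≤ n) (a : Fin n → ℝ) (i : Fin n)
    (δ : ℝ) (hδ : 0 < δ) (hdom : ∀ j : Fin n, j ≠ i → a i ≥ a j + δ)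
    (c : ℝ) (hc : 0 < c) :
    Real.exp (c * a i) / (∑ j : Fin n, Real.exp (c * a j)) ≥
      Real.exp (c * δ) / (Real.exp (c * δ) + ((n : ℝ) - 1)) := by
  set E := Real.exp (c * a i) with hE
  have hEpos : 0 < E := Real.exp_pos _
  set D := E + ((n : ℝ) - 1) * Real.exp (c * a i - c * δ) with hD
  have hsum : (∑ j : Fin n, Real.exp (c * a j)) ≤ D := by
    rw [← Finset.sum_erase_add _ _ (Finset.mem_univ i), hD, add_comm E]
    refine add_le_add_left ?_ E
    have hcard : ((Finset.univ.erase i).card : ℝ) = (n : ℝ) - 1 := by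
      rw [Finset.card_erase_of_mem (Finset.mem_univ i)]
      simp [Finset.card_univ]
      rw [Nat.cast_sub hn]
      simp
    calc ∑ j ∈ Finset.univ.erase i, Real.exp (c * a j)
        ≤ ∑ j ∈ Finset.univ.erase i, Real.exp (c * a i - c * δ) := by
          refine Finset.sum_le_sum fun j hj => ?_
          have hji : j ≠ i := Finset.ne_of_mem_erase hj
          have := hdom j hji
          apply Real.exp_le_exp.2
          nlinarith
      _ = ((Finset.univ.erase i).card : ℝ) * Real.exp (c * a i - c * δ) := by
          rw [Finset.sum_const, nsmul_eq_mul]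
      _ = ((n : ℝ) - 1) * Real.exp (c * a i - c * δ) := by rw [hcard]
  have hsumpos : 0 < ∑ j : Fin n, Real.exp (c * a j) :=
    Finset.sum_pos (fun j _ => Real.exp_pos _) ⟨i, Finset.mem_univ i⟩
  have hDpos : 0 < D := lt_of_lt_of_le hsumpos hsum
  have hn1 : (1:ℝ) ≤ (n:ℝ) := by exact_mod_cast hn
  have hden : 0 < Real.exp (c * δ) + ((n : ℝ) - 1) := by
    have := Real.exp_pos (c * δ); linarith
  have hexp : Real.exp (c * δ) ≠ 0 := (Real.exp_pos _).ne'
  have hrhs : Real.exp (c * δ) / (Real.exp (c * δ) + ((n : ℝ) - 1)) = E / D := by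
    have hD2 : 0 < Real.exp (c * a i) + ((n:ℝ) - 1) * (Real.exp (c * a i) / Real.exp (c * δ)) := by
      rw [← Real.exp_sub]; exact hD ▸ hDpos
    rw [hD, hE, Real.exp_sub, div_eq_div_iff hden.ne' hD2.ne']
    field_simp
  rw [hrhs]
  exact div_le_div_of_nonneg_left hEpos.le hsumpos hsum
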